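/- Let ℓ, m, t be positive integers and r₁,…,r_m integers with 1 ≤ r_i < ℓ. Define f_e(y₁,…,y_m) = (∏_{i=1}^m (ℓy_i + r_i)^{e_i} − ∏_{i=1}^m r_i^{e_i})/ℓ for each tuple e with 1 ≤ |e| ≤ t. Then for every tuple e₀ with 1 ≤ |e₀| ≤ t there exist integer coefficients c_{e,e₀}, for e in the box E(e₀) = {e : 0 ≤ e_j ≤ e₀_j}, such that ℓ^{|e₀|−1}·y₁^{e₀,1}⋯y_m^{e₀,m} = ∑_{e ∈ E(e₀)} c_{e,e₀}·f_e(y₁,…,y_m), with c_{e₀,e₀} = 1 and |c_{e,e₀}| ≤ C(t,m)·∏_i r_i^{e₀,i − e_i}. -/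

import Mathlib

/-- The polynomial `f_e = (∏ (ℓ yᵢ + rᵢ)^{eᵢ} - ∏ rᵢ^{eᵢ}) / ℓ`, over `ℚ`. -/
noncomputable def fPoly (m : ℕ) (ℓ : ℕ) (r : Fin m → ℤ) (e : Fin m → ℕ) :
    MvPolynomial (Fin m) ℚ :=
  MvPolynomial.C ((ℓ : ℚ)⁻¹) *
    (∏ i, ((ℓ : ℚ) • MvPolynomial.X i + MvPolynomial.C (r i : ℚ)) ^ e i -
      MvPolynomial.C (∏ i, (r i : ℚ) ^ e i))

private lemma choose_le_two_pow (n k : ℕ) : n.choose k ≤ 2 ^ n := by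
  rcases le_or_gt k n with h | h
  · calc n.choose k ≤ ∑ j ∈ Finset.range (n + 1), n.choose j :=
        Finset.single_le_sum (fun j _ => Nat.zero_le _)
          (Finset.mem_range.mpr (Nat.lt_succ_of_le h))
    _ = 2 ^ n := Nat.sum_range_choose n
  · rw [Nat.choose_eq_zero_of_lt h]; positivity

set_option maxHeartbeats 2000000 in
theorem linear_combination_lemma (m t : ℕ) (hm : 1 ≤ m) (ht : 1 ≤ t) :
    ∃ C : ℝ, 0 < C ∧
      ∀ (ℓ : ℕ) (r : Fin m → ℤ), (∀ i, 1 ≤ r i) → (∀ i, r i < ℓ) →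
      ∀ e₀ : Fin m → ℕ, 1 ≤ ∑ i, e₀ i → ∑ i, e₀ i ≤ t →
      ∃ c : (Fin m → ℕ) → ℤ,
        c e₀ = 1 ∧
        (∀ e ∈ Finset.Icc (fun _ => 0) e₀, (|c e| : ℝ) ≤ C * ∏ i, (r i : ℝ) ^ (e₀ i - e i)) ∧
        (MvPolynomial.C ((ℓ : ℚ) ^ (∑ i, e₀ i - 1)) * ∏ i, MvPolynomial.X i ^ e₀ i =
          ∑ e ∈ Finset.Icc (fun _ => 0) e₀, (c e : ℚ) • fPoly m ℓ r e) := by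
  classical
  refine ⟨2 ^ t, by positivity, ?_⟩
  intro ℓ r hr1 hrℓ e₀ hN1 hNt
  set N := ∑ i, e₀ i with hN
  -- some index with positive exponent
  have hi0 : ∃ i, 1 ≤ e₀ i := by
    by_contra h
    push_neg at h
    have : N = 0 := Finset.sum_eq_zero fun i _ => by have := h i; omega
    omega
  obtain ⟨i₀, hi₀⟩ := hi0
  have hℓ2 : 2 ≤ ℓ := by have h1 := hr1 i₀; have h2 := hrℓ i₀; omega
  have hℓ0 : (ℓ : ℚ) ≠ 0 := Nat.cast_ne_zero.mpr (by omega)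
  refine ⟨fun e => ∏ i, ((e₀ i).choose (e i) : ℤ) * (-(r i)) ^ (e₀ i - e i), ?_, ?_, ?_⟩
  · simp [Nat.choose_self]
  · -- the bound
    intro e he
    rw [Finset.mem_Icc] at he
    have habs : |∏ i, ((e₀ i).choose (e i) : ℤ) * (-(r i)) ^ (e₀ i - e i)|
        = ∏ i, ((e₀ i).choose (e i) : ℤ) * (r i) ^ (e₀ i - e i) := by
      rw [Finset.abs_prod]
      refine Finset.prod_congr rfl fun i _ => ?_
      rw [abs_mul, abs_pow, abs_neg,
        abs_of_nonneg (Int.natCast_nonneg _),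
        abs_of_nonneg (by linarith [hr1 i])]
    have hb : |((∏ i, ((e₀ i).choose (e i) : ℤ) * (-(r i)) ^ (e₀ i - e i) : ℤ) : ℝ)|
        ≤ 2 ^ t * ∏ i, (r i : ℝ) ^ (e₀ i - e i) := by
      rw [← Int.cast_abs, habs]
      push_cast
      rw [Finset.prod_mul_distrib]
      have h1 : (∏ i, ((e₀ i).choose (e i) : ℝ)) ≤ 2 ^ t := by
        calc ∏ i, ((e₀ i).choose (e i) : ℝ) ≤ ∏ i, (2 : ℝ) ^ e₀ i := by
              refine Finset.prod_le_prod (fun i _ => by positivity) fun i _ => ?_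
              exact_mod_cast Nat.cast_le.mpr (choose_le_two_pow (e₀ i) (e i))
          _ = 2 ^ N := Finset.prod_pow_eq_pow_sum _ _ _
          _ ≤ 2 ^ t := pow_le_pow_right₀ (by norm_num) hNt
      have h2 : (0 : ℝ) ≤ ∏ i, (r i : ℝ) ^ (e₀ i - e i) := by
        refine Finset.prod_nonneg fun i _ => ?_
        have := hr1 i
        positivity
      exact mul_le_mul_of_nonneg_right h1 h2
    exact hb
  · -- the polynomial identity
    have hbox : Finset.Icc (fun _ => 0 : Fin m → ℕ) e₀
        = Fintype.piFinset fun i => Finset.range (e₀ i + 1) := by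
      ext e
      simp [Finset.mem_Icc, Fintype.mem_piFinset, Nat.lt_succ_iff, Pi.le_def]
    rw [hbox]
    set A : Fin m → MvPolynomial (Fin m) ℚ :=
      fun i => MvPolynomial.C (ℓ : ℚ) * MvPolynomial.X i + MvPolynomial.C (r i : ℚ) with hA
    have hfP : ∀ e, fPoly m ℓ r e =
        MvPolynomial.C ((ℓ : ℚ)⁻¹) *
          (∏ i, A i ^ e i - MvPolynomial.C (∏ i, (r i : ℚ) ^ e i)) := by
      intro e
      unfold fPoly
      simp only [hA, MvPolynomial.smul_eq_C_mul]
    -- the cast of the coefficient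
    have hc : ∀ e : Fin m → ℕ,
        ((∏ i, ((e₀ i).choose (e i) : ℤ) * (-(r i)) ^ (e₀ i - e i) : ℤ) : ℚ)
        = ∏ i, (((e₀ i).choose (e i) : ℚ) * (-(r i : ℚ)) ^ (e₀ i - e i)) := by
      intro e
      push_cast
      exact Finset.prod_congr rfl fun i _ => by ring
    -- the main product-of-sums computation, polynomial part
    have hGsum : ∑ e ∈ Fintype.piFinset (fun i => Finset.range (e₀ i + 1)),
        (∏ i, (((e₀ i).choose (e i) : ℚ) * (-(r i : ℚ)) ^ (e₀ i - e i))) • (∏ i, A i ^ e i)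
        = MvPolynomial.C ((ℓ : ℚ) ^ N) * ∏ i, MvPolynomial.X i ^ e₀ i := by
      calc ∑ e ∈ Fintype.piFinset (fun i => Finset.range (e₀ i + 1)),
            (∏ i, (((e₀ i).choose (e i) : ℚ) * (-(r i : ℚ)) ^ (e₀ i - e i))) • (∏ i, A i ^ e i)
          = ∑ e ∈ Fintype.piFinset (fun i => Finset.range (e₀ i + 1)),
            ∏ i, (MvPolynomial.C (((e₀ i).choose (e i) : ℚ) * (-(r i : ℚ)) ^ (e₀ i - e i))
              * A i ^ e i) := by
            refine Finset.sum_congr rfl fun e _ => ?_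
            rw [MvPolynomial.smul_eq_C_mul, map_prod, ← Finset.prod_mul_distrib]
        _ = ∏ i, ∑ k ∈ Finset.range (e₀ i + 1),
              MvPolynomial.C (((e₀ i).choose k : ℚ) * (-(r i : ℚ)) ^ (e₀ i - k)) * A i ^ k :=
            (Finset.prod_univ_sum (fun i => Finset.range (e₀ i + 1))
              (fun i k => MvPolynomial.C (((e₀ i).choose k : ℚ) * (-(r i : ℚ)) ^ (e₀ i - k))
                * A i ^ k)).symm
        _ = ∏ i, (MvPolynomial.C (ℓ : ℚ) * MvPolynomial.X i) ^ e₀ i := by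
            refine Finset.prod_congr rfl fun i _ => ?_
            have h : MvPolynomial.C (ℓ : ℚ) * MvPolynomial.X i
                = A i + MvPolynomial.C (-(r i : ℚ)) := by
              rw [map_neg]; simp [hA]
            rw [h, add_pow]
            refine Finset.sum_congr rfl fun k hk => ?_
            rw [MvPolynomial.C_mul, ← MvPolynomial.C_pow,
              show (((e₀ i).choose k : ℕ) : MvPolynomial (Fin m) ℚ)
                = MvPolynomial.C (((e₀ i).choose k : ℕ) : ℚ) from
                (map_natCast MvPolynomial.C _).symm]
            ring
        _ = MvPolynomial.C ((ℓ : ℚ) ^ N) * ∏ i, MvPolynomial.X i ^ e₀ i := by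
            rw [MvPolynomial.C_pow]
            simp only [mul_pow]
            rw [Finset.prod_mul_distrib, Finset.prod_pow_eq_pow_sum]
    -- the constant part vanishes
    have hRsum : ∑ e ∈ Fintype.piFinset (fun i => Finset.range (e₀ i + 1)),
        (∏ i, (((e₀ i).choose (e i) : ℚ) * (-(r i : ℚ)) ^ (e₀ i - e i)))
          * (∏ i, (r i : ℚ) ^ e i) = 0 := by
      have : ∑ e ∈ Fintype.piFinset (fun i => Finset.range (e₀ i + 1)),
          ∏ i, ((((e₀ i).choose (e i) : ℚ) * (-(r i : ℚ)) ^ (e₀ i - e i)) * (r i : ℚ) ^ e i)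
          = ∏ i, ∑ k ∈ Finset.range (e₀ i + 1),
              ((((e₀ i).choose k : ℚ) * (-(r i : ℚ)) ^ (e₀ i - k)) * (r i : ℚ) ^ k) :=
        (Finset.prod_univ_sum (fun i => Finset.range (e₀ i + 1))
          (fun i k => (((e₀ i).choose k : ℚ) * (-(r i : ℚ)) ^ (e₀ i - k)) * (r i : ℚ) ^ k)).symm
      calc ∑ e ∈ Fintype.piFinset (fun i => Finset.range (e₀ i + 1)),
          (∏ i, (((e₀ i).choose (e i) : ℚ) * (-(r i : ℚ)) ^ (e₀ i - e i)))
            * (∏ i, (r i : ℚ) ^ e i)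
          = ∑ e ∈ Fintype.piFinset (fun i => Finset.range (e₀ i + 1)),
            ∏ i, ((((e₀ i).choose (e i) : ℚ) * (-(r i : ℚ)) ^ (e₀ i - e i)) * (r i : ℚ) ^ e i) := by
            refine Finset.sum_congr rfl fun e _ => ?_
            rw [← Finset.prod_mul_distrib]
        _ = ∏ i, ∑ k ∈ Finset.range (e₀ i + 1),
              ((((e₀ i).choose k : ℚ) * (-(r i : ℚ)) ^ (e₀ i - k)) * (r i : ℚ) ^ k) := this
        _ = ∏ i, ((r i : ℚ) + (-(r i : ℚ))) ^ e₀ i := by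
            refine Finset.prod_congr rfl fun i _ => ?_
            rw [add_pow]
            refine (Finset.sum_congr rfl fun k hk => ?_).symm
            push_cast
            ring
        _ = 0 := by
            refine Finset.prod_eq_zero (Finset.mem_univ i₀) ?_
            rw [add_neg_cancel, zero_pow (by omega)]
    -- assemble
    have expand : ∀ e : Fin m → ℕ,
        ((∏ i, ((e₀ i).choose (e i) : ℤ) * (-(r i)) ^ (e₀ i - e i) : ℤ) : ℚ) • fPoly m ℓ r e
        = MvPolynomial.C ((ℓ : ℚ)⁻¹) *
            ((∏ i, (((e₀ i).choose (e i) : ℚ) * (-(r i : ℚ)) ^ (e₀ i - e i))) • (∏ i, A i ^ e i))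
          - MvPolynomial.C ((ℓ : ℚ)⁻¹) *
            MvPolynomial.C ((∏ i, (((e₀ i).choose (e i) : ℚ) * (-(r i : ℚ)) ^ (e₀ i - e i)))
              * (∏ i, (r i : ℚ) ^ e i)) := by
      intro e
      rw [hfP, hc, MvPolynomial.smul_eq_C_mul, MvPolynomial.smul_eq_C_mul, MvPolynomial.C_mul]
      ring
    rw [Finset.sum_congr rfl fun e _ => expand e, Finset.sum_sub_distrib,
      ← Finset.mul_sum, ← Finset.mul_sum, hGsum, ← map_sum, hRsum, map_zero, mul_zero, sub_zero,
      ← mul_assoc, ← MvPolynomial.C_mul]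
    have hsc : (ℓ : ℚ) ^ (N - 1) = (ℓ : ℚ)⁻¹ * (ℓ : ℚ) ^ N := by
      have hN' : N - 1 + 1 = N := by omega
      rw [← hN', pow_succ]
      field_simp
      rw [hN']
    rw [hsc]
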